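/- If A ⊂ ℝⁿ is an open bounded convex set whose barycenter lies at the origin, and f : ℝⁿ → ℝ is a convex function whose Legendre transform f* satisfies ∫_A f* dλ = -τ < ∞, then f(x) ≥ τ/λ(A) for all x ∈ ℝⁿ. -/

import Mathlib

open MeasureTheory

/-- If `A ⊂ ℝⁿ` is an open bounded convex set with barycenter at the origin, and `f` is a
convex function whose Legendre transform `fstar` satisfies `∫_A fstar = -τ`, then
`f x ≥ τ / λ(A)` for all `x`. -/
theorem stmt0 {n : ℕ} (A : Set (EuclideanSpace ℝ (Fin n)))
    (hA : A.Nonempty) (hopen : IsOpen A) (hbdd : Bornology.IsBounded A)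
    (hconv : Convex ℝ A)
    (hbar : ∫ y in A, y = (0 : EuclideanSpace ℝ (Fin n)))
    (f fstar : EuclideanSpace ℝ (Fin n) → ℝ)
    (hf : ConvexOn ℝ Set.univ f)
    (hfstar : ∀ y ∈ A, IsLUB {z : ℝ | ∃ x, z = (inner ℝ x y : ℝ) - f x} (fstar y))
    (τ : ℝ) (hint : IntegrableOn fstar A)
    (heq : ∫ y in A, fstar y = -τ) :
    ∀ x, τ / (volume A).toReal ≤ f x := by
  intro x
  have hmeas : MeasurableSet A := hopen.measurableSet
  have hvolpos : 0 < volume A := hopen.measure_pos volume hA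
  have hvolfin : volume A < ⊤ := hbdd.measure_lt_top
  have hvolR : 0 < (volume A).toReal := ENNReal.toReal_pos hvolpos.ne' hvolfin.ne
  -- identity is integrable on A
  have hid : IntegrableOn (fun y : EuclideanSpace ℝ (Fin n) => y) A :=
    (continuous_id.continuousOn.integrableOn_compact hbdd.isCompact_closure).mono_set
      subset_closure
  -- the function y ↦ ⟪x,y⟫ - f x is integrable on A
  have hi : IntegrableOn (fun y : EuclideanSpace ℝ (Fin n) => (inner ℝ x y : ℝ)) A :=
    (innerSL ℝ x).integrable_comp hid
  have hc : IntegrableOn (fun _ : EuclideanSpace ℝ (Fin n) => f x) A :=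
    integrableOn_const hvolfin.ne
  have hg : IntegrableOn (fun y : EuclideanSpace ℝ (Fin n) => (inner ℝ x y : ℝ) - f x) A :=
    hi.sub hc
  -- pointwise inequality
  have hptw : ∀ y ∈ A, (inner ℝ x y : ℝ) - f x ≤ fstar y := fun y hy =>
    (hfstar y hy).1 ⟨x, rfl⟩
  have hle : ∫ y in A, ((inner ℝ x y : ℝ) - f x) ≤ ∫ y in A, fstar y :=
    setIntegral_mono_on hg hint hmeas hptw
  have hinner : ∫ y in A, (inner ℝ x y : ℝ) = 0 := by
    rw [integral_inner hid, hbar, inner_zero_right]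
  have hlhs : ∫ y in A, ((inner ℝ x y : ℝ) - f x) = -(f x * (volume A).toReal) := by
    rw [integral_sub hi hc, hinner, setIntegral_const, zero_sub, smul_eq_mul, mul_comm, measureReal_def]
  rw [hlhs, heq, neg_le_neg_iff] at hle
  rw [div_le_iff₀ hvolR]
  linarith
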